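/- arXiv:2405.19554 — 5 statements merged into one kernel-verified Lean document; each statement's English description precedes it below -/
import Mathlib

section
/- With ε_i(t) = (μτ/|Ω|)∫_Ω k_i |∇v_i|² dx and e = k₁ − k₂, the difference term satisfies (ε₁ − ε₂)·e ≤ (3μτ/4)∫_Ω k₁|∇φ|² dx + a(t) e², where φ = v₁ − v₂ and a(t) = μτ( (1/2)∫_Ω k₁|∇v₁|²dx + ‖∇v₁‖‖∇v₂‖ + ‖∇φ‖‖∇v₂‖ + ∫_Ω k₁|∇v₂|²dx ). -/
private lemma dissipation_aux (μ τ k₁ k₂ a b c p : ℝ) (hμ : 0 < μ) (hτ : 0 < τ)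
    (hk₁ : 0 ≤ k₁) (ha : 0 ≤ a) (hb : 0 ≤ b) (hc : 0 ≤ c)
    (hc2 : c ^ 2 = a ^ 2 - 2 * p + b ^ 2)
    (h1 : |a ^ 2 - p| ≤ a * c) (h2 : |p - b ^ 2| ≤ c * b) (h3 : |p| ≤ a * b) :
    (μ * τ * k₁ * a ^ 2 - μ * τ * k₂ * b ^ 2) * (k₁ - k₂) ≤
      3 * μ * τ / 4 * (k₁ * c ^ 2) +
        (μ * τ * (1 / 2 * (k₁ * a ^ 2) + a * b + c * b + k₁ * b ^ 2)) *
          (k₁ - k₂) ^ 2 := by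
  have hμτ : 0 < μ * τ := mul_pos hμ hτ
  rw [abs_le] at h1 h2 h3
  obtain ⟨e, rfl⟩ : ∃ e, k₂ = k₁ - e := ⟨k₁ - k₂, by ring⟩
  have H1 : k₁ * (a ^ 2 - p) * e ≤ 1 / 2 * (k₁ * c ^ 2) + 1 / 2 * (k₁ * a ^ 2) * e ^ 2 := by
    rcases le_or_gt 0 e with hle | hlt
    · nlinarith [mul_nonneg hk₁ (sq_nonneg (c - a * e)),
        mul_nonneg hk₁ (mul_nonneg hle (sub_nonneg.2 h1.2))]
    · nlinarith [mul_nonneg hk₁ (sq_nonneg (c + a * e)),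
        mul_nonneg hk₁ (mul_nonneg (neg_nonneg.2 hlt.le)
          (by linarith [h1.1] : (0:ℝ) ≤ a ^ 2 - p + a * c))]
  have H2 : k₁ * (p - b ^ 2) * e ≤ 1 / 4 * (k₁ * c ^ 2) + (k₁ * b ^ 2) * e ^ 2 := by
    rcases le_or_gt 0 e with hle | hlt
    · nlinarith [mul_nonneg hk₁ (sq_nonneg (c - 2 * b * e)),
        mul_nonneg hk₁ (mul_nonneg hle (sub_nonneg.2 h2.2))]
    · nlinarith [mul_nonneg hk₁ (sq_nonneg (c + 2 * b * e)),
        mul_nonneg hk₁ (mul_nonneg (neg_nonneg.2 hlt.le)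
          (by linarith [h2.1] : (0:ℝ) ≤ p - b ^ 2 + c * b))]
  have H3 : p * e ^ 2 ≤ a * b * e ^ 2 :=
    mul_le_mul_of_nonneg_right h3.2 (sq_nonneg e)
  have H4 : -((p - b ^ 2) * e ^ 2) ≤ c * b * e ^ 2 := by
    nlinarith [mul_le_mul_of_nonneg_right (neg_le.mp h2.1) (sq_nonneg e)]
  have key : (k₁ * a ^ 2 - (k₁ - e) * b ^ 2) * e ≤
      3 / 4 * (k₁ * c ^ 2) + (1 / 2 * (k₁ * a ^ 2) + a * b + c * b + k₁ * b ^ 2) * e ^ 2 := by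
    have expand : (k₁ * a ^ 2 - (k₁ - e) * b ^ 2) * e
        = k₁ * (a ^ 2 - p) * e + p * e ^ 2 + k₁ * (p - b ^ 2) * e - (p - b ^ 2) * e ^ 2 := by
      ring
    rw [expand]; linarith
  have final := mul_le_mul_of_nonneg_left key hμτ.le
  linarith [final]

/-- Bound on the dissipation-rate difference term in the uniqueness proof.
Here `g₁, g₂` stand for the gradients `∇v₁, ∇v₂` as elements of the (L²) inner
product space `H` (with `|Ω| = 1`), so `ε_i = μτ k_i ‖g_i‖²`, `∇φ = g₁ − g₂`,
and `e = k₁ − k₂`. -/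
theorem dissipation_difference_bound {H : Type*} [NormedAddCommGroup H]
    [InnerProductSpace ℝ H] (μ τ : ℝ) (hμ : 0 < μ) (hτ : 0 < τ)
    (k₁ k₂ : ℝ) (hk₁ : 0 ≤ k₁) (g₁ g₂ : H) :
    (μ * τ * k₁ * ‖g₁‖ ^ 2 - μ * τ * k₂ * ‖g₂‖ ^ 2) * (k₁ - k₂) ≤
      3 * μ * τ / 4 * (k₁ * ‖g₁ - g₂‖ ^ 2) +
        (μ * τ * (1 / 2 * (k₁ * ‖g₁‖ ^ 2) + ‖g₁‖ * ‖g₂‖ + ‖g₁ - g₂‖ * ‖g₂‖ +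
          k₁ * ‖g₂‖ ^ 2)) * (k₁ - k₂) ^ 2 := by
  have hc2 : ‖g₁ - g₂‖ ^ 2 = ‖g₁‖ ^ 2 - 2 * (inner ℝ g₁ g₂ : ℝ) + ‖g₂‖ ^ 2 := by
    rw [@norm_sub_sq_real]
  have h1 : |‖g₁‖ ^ 2 - (inner ℝ g₁ g₂ : ℝ)| ≤ ‖g₁‖ * ‖g₁ - g₂‖ := by
    have h : ‖g₁‖ ^ 2 - (inner ℝ g₁ g₂ : ℝ) = inner ℝ g₁ (g₁ - g₂) := by
      rw [inner_sub_right, real_inner_self_eq_norm_sq]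
    rw [h]; exact abs_real_inner_le_norm _ _
  have h2 : |(inner ℝ g₁ g₂ : ℝ) - ‖g₂‖ ^ 2| ≤ ‖g₁ - g₂‖ * ‖g₂‖ := by
    have h : (inner ℝ g₁ g₂ : ℝ) - ‖g₂‖ ^ 2 = inner ℝ (g₁ - g₂) g₂ := by
      rw [inner_sub_left, real_inner_self_eq_norm_sq]
    rw [h]; exact abs_real_inner_le_norm _ _
  have h3 : |(inner ℝ g₁ g₂ : ℝ)| ≤ ‖g₁‖ * ‖g₂‖ := abs_real_inner_le_norm _ _
  exact dissipation_aux μ τ k₁ k₂ ‖g₁‖ ‖g₂‖ ‖g₁ - g₂‖ (inner ℝ g₁ g₂) hμ hτ hk₁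
    (norm_nonneg _) (norm_nonneg _) (norm_nonneg _) hc2 h1 h2 h3
end

section
/- For the semi-discrete finite element approximation (v_h, k_h) there holds the energy equality d/dt[(1/(2|Ω|))‖v_h(t)‖² + k_h(t)] + (ν/|Ω|)‖∇v_h(t)‖² + (√2/2)τ⁻¹k_h(t) = (1/|Ω|)(f, v_h(t)). -/
open RealInnerProductSpace

/-- Energy equality for the semi-discrete approximation of the 1/2-equation
model. `Vh` is the (divergence-free) finite element space with the `L²` inner
product, `Grad : Vh →ₗ H` is the gradient operator into the `L²` space of
gradients (so `‖Grad w‖² = ‖∇w‖²`), `b` is the skew-symmetric trilinear form,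
`Ωm = |Ω|`, and `(v_h, k_h)` solves the semi-discrete scheme. The conclusion is
`d/dt[(1/(2|Ω|))‖v_h‖² + k_h] + (ν/|Ω|)‖∇v_h‖² + (√2/2)τ⁻¹k_h = (1/|Ω|)(f, v_h)`. -/
theorem semidiscrete_energy_equality {Vh H : Type*} [NormedAddCommGroup Vh]
    [InnerProductSpace ℝ Vh] [NormedAddCommGroup H] [InnerProductSpace ℝ H]
    (Grad : Vh →ₗ[ℝ] H) (b : Vh → Vh → Vh → ℝ)
    (hskew : ∀ u w : Vh, b u w w = 0)
    (ν μ τ Ωm : ℝ) (hν : 0 < ν) (hμ : 0 < μ) (hτ : 0 < τ) (hΩm : 0 < Ωm)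
    (f : Vh) (vh : ℝ → Vh) (vh' : ℝ → Vh) (kh : ℝ → ℝ)
    (hvh : ∀ t, HasDerivAt vh (vh' t) t)
    (hmomentum : ∀ t, ∀ wh : Vh,
      ⟪vh' t, wh⟫ + (ν + μ * τ * kh t) * ⟪Grad (vh t), Grad wh⟫ +
        b (vh t) (vh t) wh = ⟪f, wh⟫)
    (hkeq : ∀ t, HasDerivAt kh
      ((1 / Ωm) * (μ * τ * kh t * ‖Grad (vh t)‖ ^ 2) -
        Real.sqrt 2 / 2 * τ⁻¹ * kh t) t) :
    ∀ t, HasDerivAt (fun s => 1 / (2 * Ωm) * ‖vh s‖ ^ 2 + kh s)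
      ((1 / Ωm) * ⟪f, vh t⟫ - ν / Ωm * ‖Grad (vh t)‖ ^ 2 -
        Real.sqrt 2 / 2 * τ⁻¹ * kh t) t := by
  intro t
  have hnorm : HasDerivAt (fun s => ‖vh s‖ ^ 2)
      (⟪vh' t, vh t⟫ + ⟪vh t, vh' t⟫) t := by
    have h := (hvh t).inner ℝ (hvh t)
    simpa [real_inner_self_eq_norm_sq, add_comm] using h
  have hsum := ((hnorm.const_mul (1 / (2 * Ωm))).add (hkeq t))
  have hmom := hmomentum t (vh t)
  rw [hskew] at hmom
  have hG : ⟪Grad (vh t), Grad (vh t)⟫ = ‖Grad (vh t)‖ ^ 2 :=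
    real_inner_self_eq_norm_sq _
  rw [hG] at hmom
  have hiv : ⟪vh' t, vh t⟫ = ⟪f, vh t⟫ - (ν + μ * τ * kh t) * ‖Grad (vh t)‖ ^ 2 := by
    linarith
  have hiv2 : ⟪vh t, vh' t⟫ = ⟪vh' t, vh t⟫ := real_inner_comm _ _
  refine hsum.congr_deriv ?_
  rw [hiv2, hiv]
  field_simp
  ring
end

section
/- The semi-discrete approximation satisfies, uniformly in T: (1/2)‖v_h(T)‖² + |Ω|k_h(T) ≤ C and (1/T)∫_0^T (ν‖∇v_h‖² + (√2/2)τ⁻¹|Ω|k_h(t)) dt ≤ C, where C depends only on f, v_h(0), k_h(0), ν (not on T). -/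
open RealInnerProductSpace MeasureTheory

set_option maxHeartbeats 1000000 in
/-- Uniform-in-`T` bounds on energy and dissipation rate for the semi-discrete
approximation of the 1/2-equation model. Setting as in the energy equality:
`Vh` is the divergence-free FE space with the `L²` inner product, `Grad` the
gradient operator, `b` the skew-symmetric trilinear form, `Ωm = |Ω|`,
`CP` a Poincaré constant. The constant `C` depends only on the data
`f, v_h(0), k_h(0), ν` (and `Ωm, τ, CP`), not on `T`. -/
theorem semidiscrete_uniform_bounds {Vh H : Type*} [NormedAddCommGroup Vh]
    [InnerProductSpace ℝ Vh] [NormedAddCommGroup H] [InnerProductSpace ℝ H]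
    (Grad : Vh →ₗ[ℝ] H) (b : Vh → Vh → Vh → ℝ)
    (hskew : ∀ u w : Vh, b u w w = 0)
    (ν μ τ Ωm CP : ℝ) (hν : 0 < ν) (hμ : 0 < μ) (hτ : 0 < τ) (hΩm : 0 < Ωm)
    (hCP : 0 < CP) (hpoincare : ∀ w : Vh, ‖w‖ ≤ CP * ‖Grad w‖)
    (f : Vh) (vh : ℝ → Vh) (vh' : ℝ → Vh) (kh : ℝ → ℝ)
    (hvh : ∀ t, HasDerivAt vh (vh' t) t)
    (hmomentum : ∀ t, ∀ wh : Vh,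
      ⟪vh' t, wh⟫ + (ν + μ * τ * kh t) * ⟪Grad (vh t), Grad wh⟫ +
        b (vh t) (vh t) wh = ⟪f, wh⟫)
    (hkeq : ∀ t, HasDerivAt kh
      ((1 / Ωm) * (μ * τ * kh t * ‖Grad (vh t)‖ ^ 2) -
        Real.sqrt 2 / 2 * τ⁻¹ * kh t) t)
    (hknonneg : ∀ t, 0 ≤ kh t) :
    ∃ C : ℝ, 0 < C ∧ ∀ T > (0 : ℝ),
      1 / 2 * ‖vh T‖ ^ 2 + Ωm * kh T ≤ C ∧
      (1 / T) * ∫ t in Set.Ioc (0 : ℝ) T,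
        (ν * ‖Grad (vh t)‖ ^ 2 + Real.sqrt 2 / 2 * τ⁻¹ * Ωm * kh t) ≤ C := by
  classical
  have hsqrt2 : (0:ℝ) < Real.sqrt 2 := Real.sqrt_pos.2 (by norm_num)
  set s : ℝ := Real.sqrt 2 / 2 * τ⁻¹ with hs_def
  have hs0 : 0 < s := mul_pos (by positivity) (inv_pos.2 hτ)
  set Df : ℝ → ℝ := fun t => ν * ‖Grad (vh t)‖ ^ 2 + Real.sqrt 2 / 2 * τ⁻¹ * Ωm * kh t
    with hDf_def
  set E : ℝ → ℝ := fun t => 1/2 * ‖vh t‖ ^ 2 + Ωm * kh t with hE_def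
  have hΩ0 : Ωm ≠ 0 := ne_of_gt hΩm
  have hvdiff : Differentiable ℝ vh := fun t => (hvh t).differentiableAt
  have hvcont : Continuous vh := hvdiff.continuous
  -- energy identity
  have hEderiv : ∀ t, HasDerivAt E (⟪f, vh t⟫ - Df t) t := by
    intro t
    have h1 : HasDerivAt (fun u => ⟪vh u, vh u⟫) (⟪vh t, vh' t⟫ + ⟪vh' t, vh t⟫) t :=
      HasDerivAt.inner ℝ (hvh t) (hvh t)
    have h1' : HasDerivAt (fun u => 1/2 * ‖vh u‖ ^ 2)
        (1/2 * (⟪vh t, vh' t⟫ + ⟪vh' t, vh t⟫)) t := by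
      have := h1.const_mul (1/2 : ℝ)
      simpa [real_inner_self_eq_norm_sq] using this
    have h2 := (hkeq t).const_mul Ωm
    have h3 := h1'.add h2
    have hm := hmomentum t (vh t)
    rw [hskew (vh t) (vh t)] at hm
    have hGG : ⟪Grad (vh t), Grad (vh t)⟫ = ‖Grad (vh t)‖ ^ 2 :=
      real_inner_self_eq_norm_sq _
    rw [hGG] at hm
    have hsym : ⟪vh t, vh' t⟫ = ⟪vh' t, vh t⟫ := real_inner_comm _ _
    convert h3 using 1
    · rfl
    · rfl
    · rfl
    have hX : ⟪vh' t, vh t⟫ = ⟪f, vh t⟫ - (ν + μ * τ * kh t) * ‖Grad (vh t)‖ ^ 2 := by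
      linarith [hm]
    rw [hsym, hX, hs_def]
    simp only [hDf_def]
    field_simp
    ring
  have hEnn : ∀ t, 0 ≤ E t := by
    intro t
    have h1 : (0:ℝ) ≤ ‖vh t‖ ^ 2 := by positivity
    have h2 : 0 ≤ Ωm * kh t := mul_nonneg hΩm.le (hknonneg t)
    simp only [hE_def]; linarith
  set K : ℝ := CP ^ 2 * ‖f‖ ^ 2 / (2 * ν) + 1 with hK_def
  have hK0 : 0 < K := by positivity
  have hyoung : ∀ t, ⟪f, vh t⟫ ≤ ν / 2 * ‖Grad (vh t)‖ ^ 2 + K := by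
    intro t
    have h1 : ⟪f, vh t⟫ ≤ ‖f‖ * ‖vh t‖ := real_inner_le_norm f (vh t)
    have h2 : ‖vh t‖ ≤ CP * ‖Grad (vh t)‖ := hpoincare (vh t)
    have h3 : ‖f‖ * ‖vh t‖ ≤ ‖f‖ * (CP * ‖Grad (vh t)‖) :=
      mul_le_mul_of_nonneg_left h2 (norm_nonneg f)
    have h4 : ‖f‖ * (CP * ‖Grad (vh t)‖) ≤ CP ^ 2 * ‖f‖ ^ 2 / (2 * ν)
        + ν / 2 * ‖Grad (vh t)‖ ^ 2 := by
      rw [div_add' _ _ _ (by positivity : (2:ℝ) * ν ≠ 0), le_div_iff₀ (by positivity)]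
      nlinarith [sq_nonneg (CP * ‖f‖ - ν * ‖Grad (vh t)‖)]
    simp only [hK_def]; linarith
  set α : ℝ := min (ν / CP ^ 2) s with hα_def
  have hα0 : 0 < α := lt_min (div_pos hν (by positivity)) hs0
  have hαs : α ≤ s := min_le_right _ _
  have hαν : α ≤ ν / CP ^ 2 := min_le_left _ _
  have hdecay : ∀ t, ⟪f, vh t⟫ - Df t ≤ K - α * E t := by
    intro t
    have hy := hyoung t
    have hv2 : ‖vh t‖ ^ 2 ≤ CP ^ 2 * ‖Grad (vh t)‖ ^ 2 := by
      nlinarith [hpoincare (vh t), norm_nonneg (vh t), norm_nonneg (Grad (vh t)), hCP]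
    have hG2 : (0:ℝ) ≤ ‖Grad (vh t)‖ ^ 2 := by positivity
    have hh1 : α * (1/2 * ‖vh t‖ ^ 2) ≤ ν / 2 * ‖Grad (vh t)‖ ^ 2 := by
      have : α * ‖vh t‖ ^ 2 ≤ (ν / CP ^ 2) * (CP ^ 2 * ‖Grad (vh t)‖ ^ 2) := by
        apply mul_le_mul hαν hv2 (by positivity) (by positivity)
      have hCP2 : (CP:ℝ) ^ 2 ≠ 0 := by positivity
      calc α * (1/2 * ‖vh t‖ ^ 2) = 1/2 * (α * ‖vh t‖ ^ 2) := by ring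
        _ ≤ 1/2 * ((ν / CP ^ 2) * (CP ^ 2 * ‖Grad (vh t)‖ ^ 2)) := by linarith
        _ = ν / 2 * ‖Grad (vh t)‖ ^ 2 := by field_simp
    have hh2 : α * (Ωm * kh t) ≤ s * Ωm * kh t := by
      have := mul_nonneg hΩm.le (hknonneg t)
      nlinarith [hαs]
    simp only [hE_def, hDf_def]
    have hsd : Real.sqrt 2 / 2 * τ⁻¹ * Ωm * kh t = s * Ωm * kh t := by
      rw [hs_def]
    rw [hsd]
    nlinarith [hy, hh1, hh2]
  -- Gronwall bound
  set B : ℝ := max (E 0) (K / α) with hB_def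
  have hBpos : 0 < B := lt_of_lt_of_le (div_pos hK0 hα0) (le_max_right _ _)
  have hEB : ∀ T : ℝ, 0 ≤ T → E T ≤ B := by
    intro T hT
    set F : ℝ → ℝ := fun t => (E t - K / α) * Real.exp (α * t) with hF_def
    have hFd : ∀ t, HasDerivAt F
        ((⟪f, vh t⟫ - Df t + α * (E t - K / α)) * Real.exp (α * t)) t := by
      intro t
      have hexp : HasDerivAt (fun u : ℝ => Real.exp (α * u)) (Real.exp (α * t) * α) t := by
        simpa using (((hasDerivAt_id t).const_mul α).exp)
      have := ((hEderiv t).sub_const (K / α)).mul hexp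
      convert this using 1
      · rfl
      · rfl
      · rfl
      ring
    have hF' : ∀ t, deriv F t ≤ 0 := by
      intro t
      rw [(hFd t).deriv]
      apply mul_nonpos_of_nonpos_of_nonneg _ (Real.exp_nonneg _)
      have h3 : α * (E t - K / α) = α * E t - K := by
        field_simp
      rw [h3]
      linarith [hdecay t]
    have hanti : Antitone F := antitone_of_deriv_nonpos
      (fun t => (hFd t).differentiableAt) hF'
    have hFT := hanti hT
    simp only [hF_def, mul_zero, Real.exp_zero, mul_one] at hFT
    rcases le_or_gt (E T) (K / α) with h | h
    · exact h.trans (le_max_right _ _)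
    · have hexp1 : 1 ≤ Real.exp (α * T) := Real.one_le_exp (by positivity)
      have hmul : (E T - K / α) * 1 ≤ (E T - K / α) * Real.exp (α * T) :=
        mul_le_mul_of_nonneg_left hexp1 (by linarith)
      have : E T - K / α ≤ E 0 - K / α := by
        rw [mul_one] at hmul
        exact hmul.trans hFT
      exact (sub_le_sub_iff_right (K / α)).1 this |>.trans (le_max_left _ _)
  -- bound near T = 0 via the derivative at 0
  set e0 : ℝ := ⟪f, vh 0⟫ - Df 0 with he0_def
  have hslope : Filter.Tendsto (slope E 0) (nhdsWithin 0 {(0:ℝ)}ᶜ) (nhds e0) :=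
    hasDerivAt_iff_tendsto_slope.mp (hEderiv 0)
  have hev : ∀ᶠ y in nhdsWithin (0:ℝ) {(0:ℝ)}ᶜ, e0 - 1 < slope E 0 y :=
    hslope (Ioi_mem_nhds (by linarith))
  rw [eventually_nhdsWithin_iff, Metric.eventually_nhds_iff] at hev
  obtain ⟨δ, hδ0, hδ⟩ := hev
  set M2 : ℝ := ‖f‖ * Real.sqrt (2 * B) with hM2_def
  have hM2nn : 0 ≤ M2 := mul_nonneg (norm_nonneg _) (Real.sqrt_nonneg _)
  have hfvb : ∀ t : ℝ, 0 ≤ t → ⟪f, vh t⟫ ≤ M2 := by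
    intro t ht
    have h1 : ⟪f, vh t⟫ ≤ ‖f‖ * ‖vh t‖ := real_inner_le_norm f (vh t)
    have h2 : ‖vh t‖ ≤ Real.sqrt (2 * B) := by
      rw [show ‖vh t‖ = Real.sqrt (‖vh t‖ ^ 2) by
        rw [Real.sqrt_sq (norm_nonneg _)]]
      apply Real.sqrt_le_sqrt
      have hEt := hEB t ht
      have h3 : 0 ≤ Ωm * kh t := mul_nonneg hΩm.le (hknonneg t)
      simp only [hE_def] at hEt
      linarith
    calc ⟪f, vh t⟫ ≤ ‖f‖ * ‖vh t‖ := h1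
      _ ≤ ‖f‖ * Real.sqrt (2 * B) := mul_le_mul_of_nonneg_left h2 (norm_nonneg _)
  set Q : ℝ := max (1 - e0) (E 0 / δ) with hQ_def
  have hq : ∀ T : ℝ, 0 < T → E 0 - E T ≤ Q * T := by
    intro T hT
    rcases lt_or_ge T δ with hTδ | hTδ
    · have hmem : T ∈ ({(0:ℝ)}ᶜ : Set ℝ) := by simp [hT.ne']
      have hdist : dist T (0:ℝ) < δ := by
        simp [Real.dist_eq, abs_of_pos hT, hTδ]
      have := hδ hdist hmem
      rw [slope_def_field] at this
      have hslopeT : e0 - 1 < (E T - E 0) / (T - 0) := by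
        simpa [slope, div_eq_mul_inv] using this
      rw [sub_zero, lt_div_iff₀ hT] at hslopeT
      have h1 : E 0 - E T ≤ (1 - e0) * T := by nlinarith
      have h2 : (1 - e0) * T ≤ Q * T := by
        apply mul_le_mul_of_nonneg_right (le_max_left _ _) hT.le
      linarith
    · have h1 : E 0 - E T ≤ E 0 := by linarith [hEnn T]
      have h2 : E 0 ≤ (E 0 / δ) * T := by
        rw [div_mul_eq_mul_div, le_div_iff₀ hδ0]
        have := hEnn 0
        nlinarith
      have h3 : (E 0 / δ) * T ≤ Q * T :=
        mul_le_mul_of_nonneg_right (le_max_right _ _) hT.le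
      exact h1.trans (h2.trans h3)
  -- final constant
  refine ⟨max B (Q + M2) + 1, ?_, ?_⟩
  · have : 0 < max B (Q + M2) := lt_of_lt_of_le hBpos (le_max_left _ _)
    linarith
  intro T hT
  constructor
  · have := hEB T hT.le
    simp only [hE_def] at this
    have h1 : B ≤ max B (Q + M2) := le_max_left _ _
    linarith
  · by_cases hint : IntegrableOn
      (fun t => ν * ‖Grad (vh t)‖ ^ 2 + Real.sqrt 2 / 2 * τ⁻¹ * Ωm * kh t)
      (Set.Ioc (0:ℝ) T) volume
    · have hcont_fv : Continuous (fun t => ⟪f, vh t⟫) :=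
        continuous_const.inner hvcont
      set G : ℝ → ℝ := fun u => (∫ x in (0:ℝ)..u, ⟪f, vh x⟫) - E u with hG_def
      have hGd : ∀ t : ℝ, HasDerivAt G (Df t) t := by
        intro t
        have h1 : HasDerivAt (fun u => ∫ x in (0:ℝ)..u, ⟪f, vh x⟫) (⟪f, vh t⟫) t :=
          intervalIntegral.integral_hasDerivAt_right
            (hcont_fv.intervalIntegrable _ _)
            hcont_fv.stronglyMeasurable.stronglyMeasurableAtFilter
            hcont_fv.continuousAt
        have := h1.sub (hEderiv t)
        convert this using 1
        · rfl
        · rfl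
        · rfl
        ring
      have key : (∫ y in (0:ℝ)..T, Df y) ≤ G T - G 0 := by
        apply intervalIntegral.integral_le_sub_of_hasDeriv_right_of_le hT.le
        · intro x _
          exact ((hGd x).differentiableAt.continuousAt).continuousWithinAt
        · intro x _
          exact (hGd x).hasDerivWithinAt
        · rw [integrableOn_Icc_iff_integrableOn_Ioc]
          exact hint
        · intro x _
          exact le_rfl
      have hG0 : G 0 = -(E 0) := by
        simp [hG_def]
      have hintfv : (∫ x in (0:ℝ)..T, ⟪f, vh x⟫) ≤ M2 * T := by
        have h1 : (∫ x in (0:ℝ)..T, ⟪f, vh x⟫) ≤ ∫ _x in (0:ℝ)..T, M2 := by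
          apply intervalIntegral.integral_mono_on hT.le
            (hcont_fv.intervalIntegrable _ _) intervalIntegrable_const
          intro x hx
          exact hfvb x hx.1
        rw [intervalIntegral.integral_const] at h1
        simpa [mul_comm] using h1
      have hIoc : (∫ t in Set.Ioc (0:ℝ) T,
          (ν * ‖Grad (vh t)‖ ^ 2 + Real.sqrt 2 / 2 * τ⁻¹ * Ωm * kh t))
          = ∫ y in (0:ℝ)..T, Df y := by
        rw [intervalIntegral.integral_of_le hT.le]
      have hsum : (∫ t in Set.Ioc (0:ℝ) T,
          (ν * ‖Grad (vh t)‖ ^ 2 + Real.sqrt 2 / 2 * τ⁻¹ * Ωm * kh t))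
          ≤ (Q + M2) * T := by
        rw [hIoc]
        have hq' := hq T hT
        have : G T - G 0 ≤ M2 * T + Q * T := by
          have h0 : G T = (∫ x in (0:ℝ)..T, ⟪f, vh x⟫) - E T := rfl
          rw [h0, hG0]
          linarith [hintfv, hq']
        calc (∫ y in (0:ℝ)..T, Df y) ≤ G T - G 0 := key
          _ ≤ M2 * T + Q * T := this
          _ = (Q + M2) * T := by ring
      rw [one_div, inv_mul_le_iff₀ hT]
      calc (∫ t in Set.Ioc (0:ℝ) T,
          (ν * ‖Grad (vh t)‖ ^ 2 + Real.sqrt 2 / 2 * τ⁻¹ * Ωm * kh t))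
          ≤ (Q + M2) * T := hsum
        _ ≤ (max B (Q + M2) + 1) * T := by
          apply mul_le_mul_of_nonneg_right _ hT.le
          have := le_max_right B (Q + M2)
          linarith
        _ = T * (max B (Q + M2) + 1) := by ring
    · rw [MeasureTheory.integral_undef hint]
      have : 0 < max B (Q + M2) + 1 := by
        have : 0 < max B (Q + M2) := lt_of_lt_of_le hBpos (le_max_left _ _)
        linarith
      simp only [mul_zero]
      linarith
end

section
/- The backward Euler fully-discrete scheme for the 1/2-equation model is unconditionally stable: for all N and any Δt > 0, ‖v_h^N‖² + 2|Ω|k_h^N + Δt Σ_{n=0}^{N−1}(ν‖∇v_h^{n+1}‖² + √2 τ⁻¹|Ω|k_h^{n+1}) + Σ_{n=0}^{N−1}‖v_h^{n+1} − v_h^n‖² ≤ CΔt Σ_{n=0}^{N−1}‖f^{n+1}‖² + ‖v_h^0‖² + 2|Ω|k_h^0. -/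
open RealInnerProductSpace Finset

/-- Unconditional stability of the backward Euler fully discrete scheme for the
1/2-equation model. `Vh` is the divergence-free FE space with `L²` inner
product, `Grad` the gradient operator, `b` the skew-symmetric trilinear form,
`Ωm = |Ω|`, `CP` a Poincaré constant, and `(v_h^n, k_h^n)` solves the scheme.
The constant `C` depends only on `ν` and the Poincaré constant. -/
theorem backward_euler_unconditional_stability {Vh H : Type*}
    [NormedAddCommGroup Vh] [InnerProductSpace ℝ Vh] [NormedAddCommGroup H]
    [InnerProductSpace ℝ H]
    (Grad : Vh →ₗ[ℝ] H) (b : Vh → Vh → Vh → ℝ)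
    (hskew : ∀ u w : Vh, b u w w = 0)
    (ν μ τ Ωm CP Δt : ℝ) (hν : 0 < ν) (hμ : 0 < μ) (hτ : 0 < τ)
    (hΩm : 0 < Ωm) (hCP : 0 < CP) (hΔt : 0 < Δt)
    (hpoincare : ∀ w : Vh, ‖w‖ ≤ CP * ‖Grad w‖)
    (f : ℕ → Vh) (vh : ℕ → Vh) (kh : ℕ → ℝ) (hk0 : 0 ≤ kh 0)
    (hmomentum : ∀ n : ℕ, ∀ wh : Vh,
      ⟪(Δt)⁻¹ • (vh (n + 1) - vh n), wh⟫ +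
        (ν + μ * τ * kh n) * ⟪Grad (vh (n + 1)), Grad wh⟫ +
        b (vh n) (vh (n + 1)) wh = ⟪f (n + 1), wh⟫)
    (hkeq : ∀ n : ℕ,
      (kh (n + 1) - kh n) / Δt + Real.sqrt 2 / 2 * τ⁻¹ * kh (n + 1) =
        (1 / Ωm) * (μ * τ * kh n * ‖Grad (vh (n + 1))‖ ^ 2)) :
    ∃ C : ℝ, 0 < C ∧ ∀ N : ℕ,
      ‖vh N‖ ^ 2 + 2 * Ωm * kh N +
        Δt * ∑ n ∈ range N,
          (ν * ‖Grad (vh (n + 1))‖ ^ 2 + Real.sqrt 2 * τ⁻¹ * Ωm * kh (n + 1)) +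
        ∑ n ∈ range N, ‖vh (n + 1) - vh n‖ ^ 2 ≤
      C * Δt * ∑ n ∈ range N, ‖f (n + 1)‖ ^ 2 + ‖vh 0‖ ^ 2 + 2 * Ωm * kh 0 := by
  have hΔi : 0 < Δt⁻¹ := inv_pos.mpr hΔt
  have hτi : 0 < τ⁻¹ := inv_pos.mpr hτ
  have hs2 : 0 ≤ Real.sqrt 2 := Real.sqrt_nonneg 2
  have hcancel : Δt * Δt⁻¹ = 1 := mul_inv_cancel₀ hΔt.ne'
  have hΩc : Ωm * Ωm⁻¹ = 1 := mul_inv_cancel₀ hΩm.ne'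
  -- nonnegativity of kh
  have hknn : ∀ n, 0 ≤ kh n := by
    intro n
    induction n with
    | zero => exact hk0
    | succ n ih =>
      have h := hkeq n
      rw [div_eq_mul_inv, sub_mul] at h
      have hrhs : 0 ≤ (1 / Ωm) * (μ * τ * kh n * ‖Grad (vh (n + 1))‖ ^ 2) := by
        positivity
      by_contra hneg
      push_neg at hneg
      have h1 : kh (n + 1) * Δt⁻¹ < 0 := mul_neg_of_neg_of_pos hneg hΔi
      have h2 : Real.sqrt 2 / 2 * τ⁻¹ * kh (n + 1) ≤ 0 :=
        mul_nonpos_of_nonneg_of_nonpos (by positivity) hneg.le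
      have h3 : 0 ≤ kh n * Δt⁻¹ := mul_nonneg ih hΔi.le
      linarith
  -- per-step estimate
  have step : ∀ n : ℕ,
      ‖vh (n + 1)‖ ^ 2 + 2 * Ωm * kh (n + 1) +
        Δt * (ν * ‖Grad (vh (n + 1))‖ ^ 2 + Real.sqrt 2 * τ⁻¹ * Ωm * kh (n + 1)) +
        ‖vh (n + 1) - vh n‖ ^ 2 ≤
      ‖vh n‖ ^ 2 + 2 * Ωm * kh n + (CP ^ 2 / ν) * Δt * ‖f (n + 1)‖ ^ 2 := by
    intro n
    have hm := hmomentum n (vh (n + 1))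
    rw [hskew, real_inner_smul_left, real_inner_self_eq_norm_sq] at hm
    -- polarization identity
    have hA : 2 * ⟪vh (n + 1) - vh n, vh (n + 1)⟫ =
        ‖vh (n + 1)‖ ^ 2 - ‖vh n‖ ^ 2 + ‖vh (n + 1) - vh n‖ ^ 2 := by
      have h1 : ‖vh (n + 1) - vh n‖ ^ 2 =
          ‖vh (n + 1)‖ ^ 2 - 2 * ⟪vh (n + 1), vh n⟫ + ‖vh n‖ ^ 2 := by
        rw [norm_sub_sq_real]
      have h2 : ⟪vh (n + 1) - vh n, vh (n + 1)⟫ =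
          ⟪vh (n + 1), vh (n + 1)⟫ - ⟪vh n, vh (n + 1)⟫ := inner_sub_left _ _ _
      have h3 : ⟪vh n, vh (n + 1)⟫ = ⟪vh (n + 1), vh n⟫ := real_inner_comm _ _
      have h4 : ⟪vh (n + 1), vh (n + 1)⟫ = ‖vh (n + 1)‖ ^ 2 :=
        real_inner_self_eq_norm_sq _
      linarith
    -- momentum equation multiplied by 2Δt
    have hm2 : 2 * ⟪vh (n + 1) - vh n, vh (n + 1)⟫ +
        2 * Δt * ((ν + μ * τ * kh n) * ‖Grad (vh (n + 1))‖ ^ 2) =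
        2 * Δt * ⟪f (n + 1), vh (n + 1)⟫ := by
      linear_combination (2 * Δt) * hm +
        (-2 * (⟪vh (n + 1) - vh n, vh (n + 1)⟫ : ℝ)) * hcancel
    -- k-equation multiplied by 2ΩmΔt
    have hC2 : 2 * Ωm * (kh (n + 1) - kh n) +
        Δt * (Real.sqrt 2 * τ⁻¹ * Ωm * kh (n + 1)) =
        2 * Δt * (μ * τ * kh n * ‖Grad (vh (n + 1))‖ ^ 2) := by
      linear_combination (2 * Ωm * Δt) * (hkeq n) -
        2 * Ωm * (kh (n + 1) - kh n) * hcancel +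
        2 * Δt * (μ * τ * kh n * ‖Grad (vh (n + 1))‖ ^ 2) * hΩc
    -- Cauchy–Schwarz + Poincaré
    have hD : ⟪f (n + 1), vh (n + 1)⟫ ≤ CP * ‖f (n + 1)‖ * ‖Grad (vh (n + 1))‖ := by
      calc ⟪f (n + 1), vh (n + 1)⟫ ≤ ‖f (n + 1)‖ * ‖vh (n + 1)‖ := real_inner_le_norm _ _
        _ ≤ ‖f (n + 1)‖ * (CP * ‖Grad (vh (n + 1))‖) :=
            mul_le_mul_of_nonneg_left (hpoincare _) (norm_nonneg _)
        _ = CP * ‖f (n + 1)‖ * ‖Grad (vh (n + 1))‖ := by ring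
    -- Young's inequality
    have hE : 2 * (CP * ‖f (n + 1)‖ * ‖Grad (vh (n + 1))‖) ≤
        (CP ^ 2 / ν) * ‖f (n + 1)‖ ^ 2 + ν * ‖Grad (vh (n + 1))‖ ^ 2 := by
      have hkey : 2 * (CP * ‖f (n + 1)‖ * ‖Grad (vh (n + 1))‖) * ν ≤
          CP ^ 2 * ‖f (n + 1)‖ ^ 2 + ν ^ 2 * ‖Grad (vh (n + 1))‖ ^ 2 := by
        nlinarith [sq_nonneg (CP * ‖f (n + 1)‖ - ν * ‖Grad (vh (n + 1))‖)]
      calc 2 * (CP * ‖f (n + 1)‖ * ‖Grad (vh (n + 1))‖)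
          = 2 * (CP * ‖f (n + 1)‖ * ‖Grad (vh (n + 1))‖) * ν / ν := by
            field_simp
        _ ≤ (CP ^ 2 * ‖f (n + 1)‖ ^ 2 + ν ^ 2 * ‖Grad (vh (n + 1))‖ ^ 2) / ν := by
            gcongr
        _ = (CP ^ 2 / ν) * ‖f (n + 1)‖ ^ 2 + ν * ‖Grad (vh (n + 1))‖ ^ 2 := by
            field_simp
    have hDm : 2 * Δt * ⟪f (n + 1), vh (n + 1)⟫ ≤
        2 * Δt * (CP * ‖f (n + 1)‖ * ‖Grad (vh (n + 1))‖) :=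
      mul_le_mul_of_nonneg_left hD (by positivity)
    have hEm := mul_le_mul_of_nonneg_left hE hΔt.le
    linarith [hm2, hC2, hA, hDm, hEm]
  -- put C := CP^2/ν and sum up
  refine ⟨CP ^ 2 / ν, by positivity, ?_⟩
  intro N
  induction N with
  | zero => simp
  | succ N ih =>
    rw [sum_range_succ, sum_range_succ, sum_range_succ]
    have hs := step N
    linarith [hs, ih]
end

section
/- If k_h^0 ≥ 0 in the fully discrete scheme, then k_h^n ≥ 0 for all n ≥ 0. Explicitly, k_h^{n+1} = (k_h^n + Δt·μτ k_h^n ‖∇v_h^{n+1}‖²/|Ω|)/(1 + (√2/2)τ⁻¹Δt), which is nonnegative whenever k_h^n ≥ 0. -/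
/-- Nonnegativity of `k_h^n` in the backward Euler k-equation: here `g (n+1)`
stands for `‖∇v_h^{n+1}‖² ≥ 0`. If `k_h^0 ≥ 0` then `k_h^n ≥ 0` for all `n`,
and explicitly
`k_h^{n+1} = (k_h^n + Δt μτ k_h^n g^{n+1}/|Ω|)/(1 + (√2/2)τ⁻¹Δt)`. -/
theorem kh_nonneg (Δt τ μ Ωm : ℝ) (hΔt : 0 < Δt) (hτ : 0 < τ) (hμ : 0 < μ)
    (hΩm : 0 < Ωm) (kh : ℕ → ℝ) (g : ℕ → ℝ) (hg : ∀ n, 0 ≤ g n)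
    (hkeq : ∀ n : ℕ,
      (kh (n + 1) - kh n) / Δt + Real.sqrt 2 / 2 * τ⁻¹ * kh (n + 1) =
        μ * τ / Ωm * kh n * g (n + 1))
    (hk0 : 0 ≤ kh 0) :
    (∀ n : ℕ, 0 ≤ kh n) ∧
    ∀ n : ℕ, kh (n + 1) =
      (kh n + Δt * μ * τ * kh n * g (n + 1) / Ωm) /
        (1 + Real.sqrt 2 / 2 * τ⁻¹ * Δt) := by
  have hden : 0 < 1 + Real.sqrt 2 / 2 * τ⁻¹ * Δt := by
    have h2 : (0:ℝ) ≤ Real.sqrt 2 := Real.sqrt_nonneg 2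
    positivity
  have hform : ∀ n : ℕ, kh (n + 1) =
      (kh n + Δt * μ * τ * kh n * g (n + 1) / Ωm) /
        (1 + Real.sqrt 2 / 2 * τ⁻¹ * Δt) := by
    intro n
    have h := hkeq n
    rw [eq_div_iff hden.ne']
    field_simp at h ⊢
    nlinarith [h]
  have hnn : ∀ n : ℕ, 0 ≤ kh n := by
    intro n
    induction n with
    | zero => exact hk0
    | succ m ih =>
      rw [hform m]
      apply div_nonneg _ hden.le
      have : 0 ≤ Δt * μ * τ * kh m * g (m + 1) / Ωm :=
        div_nonneg (mul_nonneg (mul_nonneg (mul_nonneg (mul_nonneg hΔt.le hμ.le) hτ.le) ih) (hg _)) hΩm.le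
      linarith
  exact ⟨hnn, hform⟩
end
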